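/- For all real numbers a and b, |σ(b) − σ(a)| ≤ σ̇(a)·|b − a| + (1/4)·(b − a)², where σ denotes the logistic function. -/

import Mathlib

/-- The logistic (sigmoid) function `σ(x) = 1/(1 + e^{-x})`. -/
noncomputable def logistic (x : ℝ) : ℝ := 1 / (1 + Real.exp (-x))

/-- The derivative of the logistic function, `σ̇(x) = σ(x)(1 - σ(x))`. -/
noncomputable def logisticDeriv (x : ℝ) : ℝ := logistic x * (1 - logistic x)

lemma one_add_exp_pos (x : ℝ) : 0 < 1 + Real.exp (-x) := by positivity

lemma logistic_pos (x : ℝ) : 0 < logistic x := by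
  unfold logistic; positivity

lemma logistic_lt_one (x : ℝ) : logistic x < 1 := by
  unfold logistic
  rw [div_lt_one (one_add_exp_pos x)]
  linarith [Real.exp_pos (-x)]

lemma hasDerivAt_logistic (x : ℝ) : HasDerivAt logistic (logisticDeriv x) x := by
  have h1 : HasDerivAt (fun y : ℝ => 1 + Real.exp (-y)) (-Real.exp (-x)) x := by
    have := (Real.hasDerivAt_exp (-x)).comp x ((hasDerivAt_id x).neg)
    simpa using (this.const_add 1)
  have h2 := h1.inv (ne_of_gt (one_add_exp_pos x))
  have heq : logistic = fun y : ℝ => (1 + Real.exp (-y))⁻¹ := by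
    funext y; simp [logistic, one_div]
  rw [heq]
  refine h2.congr_deriv ?_
  have hpos := one_add_exp_pos x
  unfold logisticDeriv logistic
  field_simp
  ring

lemma logisticDeriv_nonneg (x : ℝ) : 0 ≤ logisticDeriv x := by
  unfold logisticDeriv
  have := logistic_pos x
  have := logistic_lt_one x
  nlinarith

lemma logisticDeriv_le_quarter (x : ℝ) : logisticDeriv x ≤ 1 / 4 := by
  unfold logisticDeriv
  nlinarith [sq_nonneg (logistic x - 1 / 2)]

/-- Mean value form: for `a ≠ b` there is `c` with `|c - a| ≤ |b - a|` and
`logistic b - logistic a = logisticDeriv c * (b - a)`. -/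
lemma logistic_mvt (a b : ℝ) (hab : a ≠ b) :
    ∃ c, |c - a| ≤ |b - a| ∧ logistic b - logistic a = logisticDeriv c * (b - a) := by
  have hcont : ∀ s : Set ℝ, ContinuousOn logistic s := by
    intro s
    exact fun x _ => ((hasDerivAt_logistic x).continuousAt).continuousWithinAt
  rcases lt_or_gt_of_ne hab with h | h
  · obtain ⟨c, hc, hc'⟩ := exists_hasDerivAt_eq_slope logistic logisticDeriv h
      (hcont _) (fun x _ => hasDerivAt_logistic x)
    refine ⟨c, ?_, ?_⟩
    · rw [abs_of_nonneg (by linarith [hc.1] : (0:ℝ) ≤ c - a),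
        abs_of_nonneg (by linarith : (0:ℝ) ≤ b - a)]
      linarith [hc.2]
    · rw [eq_div_iff (sub_ne_zero.mpr (ne_of_gt h))] at hc'
      linear_combination -hc'
  · obtain ⟨c, hc, hc'⟩ := exists_hasDerivAt_eq_slope logistic logisticDeriv h
      (hcont _) (fun x _ => hasDerivAt_logistic x)
    refine ⟨c, ?_, ?_⟩
    · rw [abs_of_nonpos (by linarith [hc.2] : c - a ≤ 0),
        abs_of_nonpos (by linarith : b - a ≤ 0)]
      linarith [hc.1]
    · rw [eq_div_iff (sub_ne_zero.mpr (ne_of_gt h))] at hc'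
      linear_combination hc'

lemma logistic_lipschitz (x y : ℝ) : |logistic x - logistic y| ≤ (1 / 4) * |x - y| := by
  rcases eq_or_ne y x with rfl | h
  · simp
  · obtain ⟨c, _, hc⟩ := logistic_mvt y x h
    rw [hc, abs_mul]
    apply mul_le_mul_of_nonneg_right _ (abs_nonneg _)
    rw [abs_of_nonneg (logisticDeriv_nonneg c)]
    exact logisticDeriv_le_quarter c

lemma logisticDeriv_lipschitz (x y : ℝ) :
    |logisticDeriv x - logisticDeriv y| ≤ (1 / 4) * |x - y| := by
  have key : logisticDeriv x - logisticDeriv y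
      = (logistic x - logistic y) * (1 - logistic x - logistic y) := by
    unfold logisticDeriv; ring
  rw [key, abs_mul]
  have h1 : |1 - logistic x - logistic y| ≤ 1 := by
    have := logistic_pos x; have := logistic_pos y
    have := logistic_lt_one x; have := logistic_lt_one y
    rw [abs_le]; constructor <;> linarith
  calc |logistic x - logistic y| * |1 - logistic x - logistic y|
      ≤ |logistic x - logistic y| * 1 :=
        mul_le_mul_of_nonneg_left h1 (abs_nonneg _)
    _ = |logistic x - logistic y| := by ring
    _ ≤ (1 / 4) * |x - y| := logistic_lipschitz x y

/-- Second-order self-concordance inequality for the logistic function: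
for all real `a`, `b`, `|σ(b) − σ(a)| ≤ σ̇(a)·|b − a| + (1/4)·(b − a)²`. -/
theorem logistic_self_concordant (a b : ℝ) :
    |logistic b - logistic a| ≤ logisticDeriv a * |b - a| + (1 / 4) * (b - a) ^ 2 := by
  rcases eq_or_ne a b with rfl | h
  · simp [logisticDeriv_nonneg]
  · obtain ⟨c, hca, hc⟩ := logistic_mvt a b h
    rw [hc, abs_mul]
    have hd : |logisticDeriv c| ≤ logisticDeriv a + (1 / 4) * |b - a| := by
      have h1 := logisticDeriv_lipschitz c a
      have h2 : |logisticDeriv c| ≤ |logisticDeriv a| + |logisticDeriv c - logisticDeriv a| := by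
        calc |logisticDeriv c| = |logisticDeriv a + (logisticDeriv c - logisticDeriv a)| := by
              ring_nf
          _ ≤ _ := abs_add_le _ _
      rw [abs_of_nonneg (logisticDeriv_nonneg a)] at h2
      have : (1/4 : ℝ) * |c - a| ≤ (1/4) * |b - a| := by gcongr
      linarith
    calc |logisticDeriv c| * |b - a|
        ≤ (logisticDeriv a + (1 / 4) * |b - a|) * |b - a| :=
          mul_le_mul_of_nonneg_right hd (abs_nonneg _)
      _ = logisticDeriv a * |b - a| + (1 / 4) * |b - a| ^ 2 := by ring
      _ = logisticDeriv a * |b - a| + (1 / 4) * (b - a) ^ 2 := by rw [sq_abs]
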